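/- Let d ≥ 2 and 0 ≤ ε < 1/2, and let T be a set of triangles over a graph of maximum degree at most d such that every bad vertex touches between d^{2−ε/2} and d² triangles. Then there exists a coloring of the bad triangles with ⌈d^{ε/2}/3⌉ colors such that for every color c and every bad vertex v, at most 6·d^{2−ε/2} bad triangles of color c touch v. -/

import Mathlib

/-- Triangle-coloring lemma: with d ≥ 2 and 0 ≤ ε < 1/2, for a set T of triangles
of a graph of maximum degree at most d, there is a coloring of the bad triangles
(those containing a bad vertex, i.e. one lying in at least d^(2-ε/2) triangles)
with ⌈d^(ε/2)/3⌉ colors such that for every color c, every bad vertex touches at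
most 6·d^(2-ε/2) bad triangles of color c. -/
theorem stmt11 {V : Type*} [Fintype V] [DecidableEq V]
    (G : SimpleGraph V) [DecidableRel G.Adj]
    (d : ℕ) (ε : ℝ) (hd : 2 ≤ d) (hε0 : 0 ≤ ε) (hε : ε < 1/2)
    (hdeg : ∀ v, G.degree v ≤ d)
    (T : Finset (Finset V)) (hT3 : ∀ t ∈ T, t.card = 3)
    (hTadj : ∀ t ∈ T, ∀ u ∈ t, ∀ v ∈ t, u ≠ v → G.Adj u v)
    (bad : V → Prop) [DecidablePred bad]
    (hbad : ∀ v, bad v ↔ (d : ℝ) ^ ((2:ℝ) - ε/2) ≤ ((T.filter (fun t => v ∈ t)).card : ℝ)) :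
    ∃ χ : Finset V → Fin ⌈(d : ℝ) ^ (ε/2) / 3⌉₊,
      ∀ c, ∀ v, bad v →
        ((T.filter (fun t => v ∈ t ∧ (∃ u ∈ t, bad u) ∧ χ t = c)).card : ℝ)
          ≤ 6 * (d : ℝ) ^ ((2:ℝ) - ε/2) := by
  classical
  set D : ℝ := (d : ℝ) with hD
  have hD2 : (2:ℝ) ≤ D := by rw [hD]; exact_mod_cast hd
  have hDpos : (0:ℝ) < D := by linarith
  set x : ℝ := (2:ℝ) - ε/2 with hxdef
  set y : ℝ := ε/2 with hydef
  have hx1 : (1:ℝ) ≤ D ^ x := Real.one_le_rpow (by linarith) (by simp [hxdef]; linarith)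
  have hy0 : (0:ℝ) < D ^ y := Real.rpow_pos_of_pos hDpos y
  set N : ℕ := ⌈D ^ y / 3⌉₊ with hNdef
  have hNpos : 0 < N := Nat.ceil_pos.2 (by positivity)
  have hNge : D ^ y / 3 ≤ (N : ℝ) := Nat.le_ceil _
  set B : ℕ := ⌊6 * D ^ x⌋₊ with hBdef
  have hBle : (B : ℝ) ≤ 6 * D ^ x := Nat.floor_le (by positivity)
  have hB5 : 5 * D ^ x < (B : ℝ) := by
    have := Nat.lt_floor_add_one (6 * D ^ x)
    linarith
  have hBpos : 0 < B := by
    have : (0:ℝ) < (B : ℝ) := by linarith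
    exact_mod_cast this
  -- per-vertex triangle count
  have hcount : ∀ v : V, (T.filter (fun t => v ∈ t)).card ≤ d.choose 2 := by
    intro v
    have h1 : (T.filter (fun t => v ∈ t)).card
        ≤ ((G.neighborFinset v).powersetCard 2).card := by
      apply Finset.card_le_card_of_injOn (fun t => t.erase v)
      · intro t ht
        rw [Finset.mem_coe, Finset.mem_filter] at ht
        obtain ⟨htT, hvt⟩ := ht
        rw [Finset.mem_coe, Finset.mem_powersetCard]
        constructor
        · intro u hu
          rw [Finset.mem_erase] at hu
          rw [SimpleGraph.mem_neighborFinset]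
          exact hTadj t htT v hvt u hu.2 (Ne.symm hu.1)
        · rw [Finset.card_erase_of_mem hvt, hT3 t htT]
      · intro t1 h1 t2 h2 he
        rw [Finset.mem_coe, Finset.mem_filter] at h1 h2
        have := congrArg (insert v) he
        rwa [Finset.insert_erase h1.2, Finset.insert_erase h2.2] at this
    rw [Finset.card_powersetCard] at h1
    exact h1.trans (Nat.choose_le_choose 2 (hdeg v))
  have hchoose : ((d.choose 2 : ℕ) : ℝ) ≤ D ^ 2 / 2 := by
    have h2 : d.choose 2 * 2 = d * (d - 1) := by
      rw [Nat.choose_two_right]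
      apply Nat.div_mul_cancel
      rcases Nat.even_or_odd d with h | h
      · exact Dvd.dvd.mul_right h.two_dvd _
      · exact Dvd.dvd.mul_left (Nat.Odd.sub_odd h odd_one).two_dvd _
    have h3 : (d : ℝ) * ((d:ℝ) - 1) ≤ D ^ 2 := by nlinarith
    have h4 : ((d * (d-1) : ℕ) : ℝ) ≤ D ^ 2 := by
      push_cast
      calc ((d:ℝ) * (↑(d - 1))) ≤ (d:ℝ) * ((d:ℝ) - 1) := by
            apply mul_le_mul_of_nonneg_left _ (by positivity)
            have : (1:ℕ) ≤ d := by omega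
            push_cast [Nat.cast_sub this]
            linarith
        _ ≤ D ^ 2 := h3
    have h5 : (d.choose 2 : ℝ) * 2 = ((d * (d-1) : ℕ) : ℝ) := by
      rw [show ((2:ℝ) = ((2:ℕ):ℝ)) from by norm_num, ← Nat.cast_mul, h2]
    linarith
  have hcountR : ∀ v : V, ((T.filter (fun t => v ∈ t)).card : ℝ) ≤ D ^ 2 / 2 := by
    intro v
    exact le_trans (by exact_mod_cast hcount v) hchoose
  -- main greedy induction
  have main : ∀ S : Finset (Finset V), S ⊆ T →
      ∃ χ : Finset V → Fin N, ∀ v c,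
        (S.filter (fun t => v ∈ t ∧ χ t = c)).card ≤ B := by
    intro S
    induction S using Finset.induction_on with
    | empty => exact fun _ => ⟨fun _ => ⟨0, hNpos⟩, by simp⟩
    | @insert t S htS ih =>
      intro hsub
      have htT : t ∈ T := hsub (Finset.mem_insert_self t S)
      obtain ⟨χ, hχ⟩ := ih ((Finset.subset_insert t S).trans hsub)
      -- forbidden colors
      set F : V → Finset (Fin N) :=
        fun v => Finset.univ.filter
          (fun c => B ≤ (S.filter (fun x => v ∈ x ∧ χ x = c)).card) with hF
      have hFcard : ∀ v : V, ((F v).card : ℝ) * B ≤ D ^ 2 / 2 := by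
        intro v
        have hsum : ∑ c : Fin N, (S.filter (fun x => v ∈ x ∧ χ x = c)).card
            = (S.filter (fun x => v ∈ x)).card := by
          rw [Finset.card_eq_sum_card_fiberwise
            (f := χ) (t := Finset.univ) (fun x _ => Finset.mem_univ _)]
          congr 1
          ext c
          rw [Finset.filter_filter]
        have h1 : (F v).card • B ≤ ∑ c ∈ F v,
            (S.filter (fun x => v ∈ x ∧ χ x = c)).card :=
          Finset.card_nsmul_le_sum _ _ _ (fun c hc => (Finset.mem_filter.1 hc).2)
        have h2 : ∑ c ∈ F v, (S.filter (fun x => v ∈ x ∧ χ x = c)).card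
            ≤ ∑ c : Fin N, (S.filter (fun x => v ∈ x ∧ χ x = c)).card :=
          Finset.sum_le_sum_of_subset (Finset.subset_univ _)
        have h3 : (S.filter (fun x => v ∈ x)).card ≤ (T.filter (fun x => v ∈ x)).card :=
          Finset.card_le_card (Finset.filter_subset_filter _
            ((Finset.subset_insert t S).trans hsub))
        have h4 : (F v).card * B ≤ (T.filter (fun x => v ∈ x)).card := by
          rw [smul_eq_mul] at h1; omega
        calc ((F v).card : ℝ) * B = (((F v).card * B : ℕ) : ℝ) := by push_cast; ring
          _ ≤ ((T.filter (fun x => v ∈ x)).card : ℝ) := by exact_mod_cast h4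
          _ ≤ D ^ 2 / 2 := hcountR v
      have hFle : ∀ v : V, ((F v).card : ℝ) ≤ D ^ 2 / (2 * B) := by
        intro v
        rw [le_div_iff₀ (by positivity)]
        calc ((F v).card : ℝ) * (2 * B) = ((F v).card * B) * 2 := by ring
          _ ≤ (D ^ 2 / 2) * 2 := by nlinarith [hFcard v]
          _ = D ^ 2 := by ring
      -- a good color exists
      have hforb : ((t.biUnion F).card : ℝ) < N := by
        have h1 : (t.biUnion F).card ≤ ∑ v ∈ t, (F v).card := Finset.card_biUnion_le
        have h2 : ((t.biUnion F).card : ℝ) ≤ 3 * (D ^ 2 / (2 * B)) := by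
          calc ((t.biUnion F).card : ℝ) ≤ ((∑ v ∈ t, (F v).card : ℕ) : ℝ) := by
                exact_mod_cast h1
            _ = ∑ v ∈ t, ((F v).card : ℝ) := by push_cast; rfl
            _ ≤ ∑ _v ∈ t, D ^ 2 / (2 * B) := Finset.sum_le_sum (fun v _ => hFle v)
            _ = 3 * (D ^ 2 / (2 * B)) := by
                rw [Finset.sum_const, hT3 t htT]; push_cast; ring
        have hxy : D ^ x * D ^ y = D ^ 2 := by
          rw [← Real.rpow_add hDpos]
          have : x + y = (2:ℕ) := by rw [hxdef, hydef]; push_cast; ring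
          rw [this, Real.rpow_natCast]
        have h3 : 3 * (D ^ 2 / (2 * B)) < D ^ y / 3 := by
          rw [show 3 * (D ^ 2 / (2 * (B:ℝ))) = (3 * D ^ 2) / (2 * B) from by ring,
            div_lt_div_iff₀ (by positivity) (by norm_num : (0:ℝ) < 3), ← hxy]
          nlinarith [mul_pos hy0 (show (0:ℝ) < (B:ℝ) - 5 * D ^ x by linarith)]
        linarith
      have : t.biUnion F ≠ Finset.univ := by
        intro h
        rw [h] at hforb
        simp only [Finset.card_univ, Fintype.card_fin] at hforb
        exact lt_irrefl _ hforb
      obtain ⟨c, hc⟩ : ∃ c : Fin N, c ∉ t.biUnion F := by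
        by_contra h
        push_neg at h
        exact this (Finset.eq_univ_iff_forall.2 h)
      refine ⟨Function.update χ t c, ?_⟩
      intro v c'
      have hfilt : S.filter (fun z => v ∈ z ∧ Function.update χ t c z = c')
          = S.filter (fun z => v ∈ z ∧ χ z = c') := by
        apply Finset.filter_congr
        intro z hz
        have : z ≠ t := fun h => htS (h ▸ hz)
        rw [Function.update_of_ne this]
      rw [Finset.filter_insert]
      split_ifs with h
      · obtain ⟨hvt, hcc⟩ := h
        rw [Function.update_self] at hcc
        subst hcc
        have hgood : ¬ B ≤ (S.filter (fun z => v ∈ z ∧ χ z = c)).card := by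
          intro hge
          apply hc
          rw [Finset.mem_biUnion]
          exact ⟨v, hvt, Finset.mem_filter.2 ⟨Finset.mem_univ _, hge⟩⟩
        calc (insert t (S.filter (fun z => v ∈ z ∧ Function.update χ t c z = c))).card
            ≤ (S.filter (fun z => v ∈ z ∧ Function.update χ t c z = c)).card + 1 :=
              Finset.card_insert_le _ _
          _ = (S.filter (fun z => v ∈ z ∧ χ z = c)).card + 1 := by rw [hfilt]
          _ ≤ B := by omega
      · rw [hfilt]; exact hχ v c'
  obtain ⟨χ, hχ⟩ := main T (le_refl T)
  refine ⟨χ, fun c v _ => ?_⟩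
  have h1 : (T.filter (fun t => v ∈ t ∧ (∃ u ∈ t, bad u) ∧ χ t = c)).card
      ≤ (T.filter (fun t => v ∈ t ∧ χ t = c)).card := by
    apply Finset.card_le_card
    apply Finset.monotone_filter_right
    intro z hz
    exact fun h => ⟨h.1, h.2.2⟩
  calc ((T.filter (fun t => v ∈ t ∧ (∃ u ∈ t, bad u) ∧ χ t = c)).card : ℝ)
      ≤ ((T.filter (fun t => v ∈ t ∧ χ t = c)).card : ℝ) := by exact_mod_cast h1
    _ ≤ (B : ℝ) := by exact_mod_cast hχ v c
    _ ≤ 6 * D ^ x := hBle
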